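/- Let k ≥ 1 and let G be a connected finite simple graph on at least k+2 vertices that contains no induced subgraph isomorphic to C_3, to K_{2,k+1}, or to the join K_2 ∨ (empty graph on k vertices). Then ppt_k(G) = 1 if and only if G has a minimum dominating set S such that every vertex in S is a k-strong support vertex of G. -/

import Mathlib

set_option linter.unusedSectionVars false
set_option linter.unusedTactic false
set_option linter.unreachableTactic false
set_option linter.unusedVariables false
set_option maxHeartbeats 1000000


namespace PowerProp

open SimpleGraph

variable {V : Type*} {α β : Type*}

/-- The closed neighborhood `N[S]` of a set of vertices. -/
def closedNbhd (G : SimpleGraph V) (S : Set V) : Set V :=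
  S ∪ ⋃ v ∈ S, G.neighborSet v

/-- One propagation step of the `k`-power domination process. -/
def propStep (k : ℕ) (G : SimpleGraph V) (S : Set V) : Set V :=
  S ∪ {w | ∃ v ∈ S, w ∈ G.neighborSet v \ S ∧ (G.neighborSet v \ S).ncard ≤ k}

/-- `S^[t]`: the set observed after `t` steps (step 1 is the domination step). -/
def powerIter (k : ℕ) (G : SimpleGraph V) (S : Set V) : ℕ → Set V
  | 0 => S
  | 1 => closedNbhd G S
  | (t + 2) => propStep k G (powerIter k G S (t + 1))

/-- `S` is a `k`-power dominating set of `G`. -/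
def IsPDS (k : ℕ) (G : SimpleGraph V) (S : Set V) : Prop :=
  ∃ l, powerIter k G S l = Set.univ

/-- The `k`-power domination number `γ_{P,k}(G)`. -/
noncomputable def pdNum (k : ℕ) (G : SimpleGraph V) : ℕ :=
  sInf {n | ∃ S : Set V, S.ncard = n ∧ IsPDS k G S}

/-- `S` is a minimum `k`-power dominating set of `G`. -/
def IsMinPDS (k : ℕ) (G : SimpleGraph V) (S : Set V) : Prop :=
  IsPDS k G S ∧ S.ncard = pdNum k G

/-- `ppt_k(G,S)`, the `k`-power propagation time of `G` with `S`. -/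
noncomputable def pptOf (k : ℕ) (G : SimpleGraph V) (S : Set V) : ℕ :=
  sInf {l | powerIter k G S l = Set.univ}

/-- `ppt_k(G)`, the (minimum) `k`-power propagation time of `G`. -/
noncomputable def ppt (k : ℕ) (G : SimpleGraph V) : ℕ :=
  sInf {t | ∃ S : Set V, IsMinPDS k G S ∧ pptOf k G S = t}

end PowerProp

open SimpleGraph

namespace PowerProp

variable {W : Type*}

/-- `S` is a dominating set of `G`. -/
def IsDomSet (G : SimpleGraph W) (S : Set W) : Prop :=
  ∀ v ∉ S, ∃ u ∈ S, G.Adj u v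

/-- The domination number `γ(G)`. -/
noncomputable def domNum (G : SimpleGraph W) : ℕ :=
  sInf {n | ∃ S : Set W, S.ncard = n ∧ IsDomSet G S}

/-- A leaf is a vertex of degree 1. -/
def IsLeaf (G : SimpleGraph W) (v : W) : Prop :=
  (G.neighborSet v).ncard = 1

/-- A `k`-strong support vertex is a vertex adjacent to at least `k+1` leaves. -/
def IsKStrongSupport (k : ℕ) (G : SimpleGraph W) (v : W) : Prop :=
  k + 1 ≤ (G.neighborSet v ∩ {u | IsLeaf G u}).ncard

end PowerProp

namespace PowerProp

/-- The join `K_2 ∨ K̄_k`, realized on `Fin (k+2)`: vertices `0` and `1` are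
adjacent to each other and to everything else; vertices `≥ 2` form an independent set. -/
def joinK2Empty (k : ℕ) : SimpleGraph (Fin (k + 2)) :=
  SimpleGraph.fromRel (fun i _ => (i : ℕ) < 2)

end PowerProp

/-! ### Auxiliary lemmas -/

namespace PowerProp

section Aux

variable {V : Type*} [Fintype V] {k : ℕ} {G : SimpleGraph V}

@[simp] lemma powerIter_zero (S : Set V) : powerIter k G S 0 = S := rfl
@[simp] lemma powerIter_one (S : Set V) : powerIter k G S 1 = closedNbhd G S := rfl
@[simp] lemma powerIter_succ_succ (S : Set V) (t : ℕ) :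
    powerIter k G S (t + 2) = propStep k G (powerIter k G S (t + 1)) := rfl

lemma mem_closedNbhd_iff {S : Set V} {w : V} :
    w ∈ closedNbhd G S ↔ w ∈ S ∨ ∃ v ∈ S, G.Adj v w := by
  simp [closedNbhd]

lemma subset_closedNbhd {S : Set V} : S ⊆ closedNbhd G S := Set.subset_union_left

lemma mem_propStep_iff {A : Set V} {w : V} :
    w ∈ propStep k G A ↔
      w ∈ A ∨ ∃ x ∈ A, w ∈ G.neighborSet x \ A ∧ (G.neighborSet x \ A).ncard ≤ k := by
  simp [propStep]

lemma subset_propStep {A : Set V} : A ⊆ propStep k G A := Set.subset_union_left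

lemma closedNbhd_eq_univ_iff {S : Set V} : closedNbhd G S = Set.univ ↔ IsDomSet G S := by
  constructor
  · intro h v hv
    have hmem : v ∈ closedNbhd G S := h ▸ Set.mem_univ v
    rcases mem_closedNbhd_iff.mp hmem with h' | ⟨u, huS, hadj⟩
    · exact absurd h' hv
    · exact ⟨u, huS, hadj⟩
  · intro h
    ext w
    simp only [Set.mem_univ, iff_true]
    by_cases hw : w ∈ S
    · exact subset_closedNbhd hw
    · obtain ⟨u, huS, hadj⟩ := h w hw
      exact mem_closedNbhd_iff.mpr (Or.inr ⟨u, huS, hadj⟩)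

lemma pdNum_exists : ∃ S : Set V, S.ncard = pdNum k G ∧ IsPDS k G S := by
  have h : {n | ∃ S : Set V, S.ncard = n ∧ IsPDS k G S}.Nonempty :=
    ⟨(Set.univ : Set V).ncard, Set.univ, rfl, ⟨0, rfl⟩⟩
  exact Nat.sInf_mem h

lemma pdNum_le {S : Set V} (h : IsPDS k G S) : pdNum k G ≤ S.ncard :=
  Nat.sInf_le ⟨S, rfl, h⟩

lemma isPDS_of_domSet {S : Set V} (h : IsDomSet G S) : IsPDS k G S :=
  ⟨1, closedNbhd_eq_univ_iff.mpr h⟩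

lemma domNum_exists : ∃ S : Set V, S.ncard = domNum G ∧ IsDomSet G S := by
  have h : {n | ∃ S : Set V, S.ncard = n ∧ IsDomSet G S}.Nonempty :=
    ⟨(Set.univ : Set V).ncard, Set.univ, rfl, fun v hv => absurd (Set.mem_univ v) hv⟩
  exact Nat.sInf_mem h

lemma domNum_le {S : Set V} (h : IsDomSet G S) : domNum G ≤ S.ncard :=
  Nat.sInf_le ⟨S, rfl, h⟩

lemma pdNum_le_domNum : pdNum k G ≤ domNum (G := G) := by
  obtain ⟨S, hcard, hdom⟩ := domNum_exists (G := G)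
  calc pdNum k G ≤ S.ncard := pdNum_le (isPDS_of_domSet hdom)
  _ = domNum G := hcard

lemma leaf_nbhd {u x : V} (hu : IsLeaf G u) (hx : G.Adj u x) : G.neighborSet u = {x} := by
  obtain ⟨a, ha⟩ := Set.ncard_eq_one.mp hu
  have hxm : x ∈ G.neighborSet u := hx
  rw [ha] at hxm ⊢
  rw [Set.mem_singleton_iff] at hxm
  rw [hxm]

lemma support_not_leaf (hk : 1 ≤ k) {v : V} (h : IsKStrongSupport k G v) : ¬ IsLeaf G v := by
  intro hl
  have h1 : (G.neighborSet v ∩ {u | IsLeaf G u}).ncard ≤ (G.neighborSet v).ncard :=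
    Set.ncard_le_ncard Set.inter_subset_left (Set.toFinite _)
  rw [IsKStrongSupport] at h
  rw [IsLeaf] at hl
  omega

lemma walk_closed {K : Set V} (hK : ∀ a ∈ K, ∀ b, G.Adj a b → b ∈ K) :
    ∀ {x y : V}, G.Walk x y → x ∈ K → y ∈ K := by
  intro x y p
  induction p with
  | nil => exact id
  | cons h _ ih => exact fun hx => ih (hK _ hx _ h)

lemma exists_adj (hconn : G.Connected) (hV : 2 ≤ Fintype.card V) (x : V) :
    ∃ y, G.Adj x y := by
  by_contra h
  push_neg at h
  have hall : ∀ y : V, y = x := by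
    intro y
    obtain ⟨p⟩ := hconn.preconnected x y
    have : y ∈ ({x} : Set V) := by
      refine walk_closed ?_ p rfl
      intro a ha b hab
      rw [Set.mem_singleton_iff] at ha
      subst ha
      exact absurd hab (h b)
    exact this
  have : Fintype.card V ≤ 1 :=
    Fintype.card_le_one_iff.mpr (fun a b => (hall a).trans (hall b).symm)
  omega

/-- Any `k`-power dominating set meets `{v} ∪ L(v)` for a `k`-strong support vertex `v`. -/
lemma pds_meets_support (hk : 1 ≤ k) {v : V} (hv : IsKStrongSupport k G v) {T : Set V}
    (hT : IsPDS k G T) :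
    ∃ x ∈ T, x = v ∨ x ∈ G.neighborSet v ∩ {u | IsLeaf G u} := by
  by_contra hcon
  push_neg at hcon
  set L := G.neighborSet v ∩ {u | IsLeaf G u} with hL
  have hvT : v ∉ T := fun h => (hcon v h).1 rfl
  have hLT : ∀ u ∈ L, u ∉ T := fun u hu huT => (hcon u huT).2 hu
  have key : ∀ t, ∀ u ∈ L, u ∉ powerIter k G T t := by
    intro t
    induction t with
    | zero => exact fun u hu => hLT u hu
    | succ n ih =>
      cases n with
      | zero =>
        intro u hu hmem
        rcases mem_closedNbhd_iff.mp hmem with h | ⟨x, hxT, hadj⟩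
        · exact hLT u hu h
        · have hvu : G.Adj v u := hu.1
          have huv : G.Adj u v := hvu.symm
          have hNu : G.neighborSet u = {v} := leaf_nbhd hu.2 huv
          have hxv : x = v := by
            have hx : x ∈ G.neighborSet u := hadj.symm
            rw [hNu] at hx
            exact hx
          exact hvT (hxv ▸ hxT)
      | succ m =>
        intro u hu hmem
        rw [powerIter_succ_succ] at hmem
        rcases mem_propStep_iff.mp hmem with h | ⟨x, hxO, ⟨hxadj, hxno⟩, hcard⟩
        · exact ih u hu h
        · have hvu : G.Adj v u := hu.1
          have huv : G.Adj u v := hvu.symm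
          have hNu : G.neighborSet u = {v} := leaf_nbhd hu.2 huv
          have hxv : x = v := by
            have hx : x ∈ G.neighborSet u := (hxadj : G.Adj x u).symm
            rw [hNu] at hx
            exact hx
          subst hxv
          have hsub : L ⊆ G.neighborSet x \ powerIter k G T (m + 1) :=
            fun z hz => ⟨hz.1, ih z hz⟩
          have hge : k + 1 ≤ (G.neighborSet x \ powerIter k G T (m + 1)).ncard :=
            le_trans hv (Set.ncard_le_ncard hsub (Set.toFinite _))
          omega
  obtain ⟨l, hl⟩ := hT
  have hLne : L.Nonempty := by
    apply Set.nonempty_of_ncard_ne_zero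
    have h1 : k + 1 ≤ L.ncard := hv
    omega
  obtain ⟨u, hu⟩ := hLne
  exact key l u hu (hl ▸ Set.mem_univ u)

lemma card_le_of_supports (hk : 1 ≤ k) {S T : Set V}
    (hsupp : ∀ v ∈ S, IsKStrongSupport k G v) (hT : IsPDS k G T) :
    S.ncard ≤ T.ncard := by
  classical
  have hmeet : ∀ v ∈ S, ∃ x ∈ T, x = v ∨ x ∈ G.neighborSet v ∩ {u | IsLeaf G u} :=
    fun v hv => pds_meets_support hk (hsupp v hv) hT
  set f : V → V := fun v =>
    if h : ∃ x ∈ T, x = v ∨ x ∈ G.neighborSet v ∩ {u | IsLeaf G u} then h.choose else v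
    with hf
  have hprop : ∀ v ∈ S, f v ∈ T ∧ (f v = v ∨ f v ∈ G.neighborSet v ∩ {u | IsLeaf G u}) := by
    intro v hv
    have h := hmeet v hv
    rw [hf]
    simp only
    rw [dif_pos h]
    exact ⟨h.choose_spec.1, h.choose_spec.2⟩
  refine Set.ncard_le_ncard_of_injOn f (fun v hv => (hprop v hv).1) ?_ (Set.toFinite _)
  intro a ha b hb hab
  obtain ⟨haT, hca⟩ := hprop a ha
  obtain ⟨hbT, hcb⟩ := hprop b hb
  rw [hab] at hca
  by_contra hne
  rcases hcb with hb' | hlb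
  · rcases hca with ha' | hla
    · exact hne (ha'.symm.trans hb')
    · exact support_not_leaf hk (hsupp b hb) (hb' ▸ hla.2)
  · rcases hca with ha' | hla
    · exact support_not_leaf hk (hsupp a ha) (ha' ▸ hlb.2)
    · have hleaf : IsLeaf G (f b) := hla.2
      have hadja : G.Adj (f b) a := (hla.1 : G.Adj a (f b)).symm
      have hadjb : G.Adj (f b) b := (hlb.1 : G.Adj b (f b)).symm
      have hN := leaf_nbhd hleaf hadja
      have : b ∈ G.neighborSet (f b) := hadjb
      rw [hN] at this
      exact hne this.symm

/-- Removing a non-`k`-strong-support vertex from a dominating set still yields a PDS. -/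
lemma remove_pds (hk : 1 ≤ k) (hconn : G.Connected)
    (htri : ∀ a b c : V, G.Adj a b → G.Adj a c → G.Adj b c → False)
    (hbip : ∀ ⦃v w : V⦄, v ≠ w → ¬ G.Adj v w →
      (G.neighborSet v ∩ G.neighborSet w).ncard ≤ k)
    {S : Set V} (hdom : IsDomSet G S) {v : V} (hvS : v ∈ S)
    (hnot : ¬ IsKStrongSupport k G v) {s : V} (hsS : s ∈ S) (hsv : s ≠ v) :
    IsPDS k G (S \ {v}) := by
  classical
  set S' := S \ {v} with hS'
  set O1 := closedNbhd G S' with hO1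
  set O2 := propStep k G O1 with hO2
  set O3 := propStep k G O2 with hO3
  set Lv := G.neighborSet v ∩ {u | IsLeaf G u} with hLvdef
  have hLvk : Lv.ncard ≤ k := by
    rw [hLvdef]
    rw [IsKStrongSupport] at hnot
    omega
  have hsS' : s ∈ S' := ⟨hsS, hsv⟩
  have hout : ∀ w, w ∉ O1 → w = v ∨ G.Adj v w := by
    intro w hw
    by_cases hwS : w ∈ S
    · by_cases hwv : w = v
      · exact Or.inl hwv
      · exact (hw (subset_closedNbhd (⟨hwS, hwv⟩ : w ∈ S'))).elim
    · obtain ⟨u, huS, hadj⟩ := hdom w hwS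
      by_cases huv : u = v
      · exact Or.inr (huv ▸ hadj)
      · exact (hw (mem_closedNbhd_iff.mpr (Or.inr ⟨u, ⟨huS, huv⟩, hadj⟩))).elim
  have hforce1 : ∀ (A : Set V) (u : V), G.Adj v u → (∀ w, w ∉ A → w = v ∨ G.Adj v w) →
      (G.neighborSet u \ A).ncard ≤ k := by
    intro A u hadj hA
    have hsub : G.neighborSet u \ A ⊆ {v} := by
      intro z hz
      rcases hA z hz.2 with rfl | hzv
      · rfl
      · exact absurd (hz.1 : G.Adj u z) (fun h => htri v u z hadj hzv h)
    calc (G.neighborSet u \ A).ncard ≤ ({v} : Set V).ncard :=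
          Set.ncard_le_ncard hsub (Set.toFinite _)
    _ = 1 := Set.ncard_singleton v
    _ ≤ k := hk
  have hvO2 : (∃ u, G.Adj v u ∧ u ∈ O1) → v ∈ O2 := by
    rintro ⟨u, hadj, huO1⟩
    by_cases hvO1 : v ∈ O1
    · exact subset_propStep hvO1
    · exact mem_propStep_iff.mpr
        (Or.inr ⟨u, huO1, ⟨(hadj.symm : G.Adj u v), hvO1⟩, hforce1 O1 u hadj hout⟩)
  have hnonleafO2 : ∀ u, G.Adj v u → ¬ IsLeaf G u → u ∈ O2 := by
    intro u hadj hleaf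
    by_cases huO1 : u ∈ O1
    · exact subset_propStep huO1
    · have hvNu : v ∈ G.neighborSet u := hadj.symm
      have hnsub : ¬ G.neighborSet u ⊆ {v} := by
        intro hsub
        apply hleaf
        have hEq : G.neighborSet u = {v} :=
          subset_antisymm hsub (by simpa using hvNu)
        rw [IsLeaf, hEq]
        exact Set.ncard_singleton v
      obtain ⟨w, hwNu, hwv⟩ := Set.not_subset.mp hnsub
      rw [Set.mem_singleton_iff] at hwv
      have hwadj : G.Adj u w := hwNu
      have hwNv : ¬ G.Adj v w := fun h => htri v u w hadj h hwadj
      have hvnw : v ≠ w := fun h => hwNv (h ▸ (by exact absurd h (Ne.symm hwv)))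
      have hwO1 : w ∈ O1 := by
        by_contra hwo
        rcases hout w hwo with h | h
        · exact hwv h
        · exact hwNv h
      refine mem_propStep_iff.mpr (Or.inr ⟨w, hwO1, ⟨(hwadj.symm : G.Adj w u), huO1⟩, ?_⟩)
      have hsub : G.neighborSet w \ O1 ⊆ G.neighborSet v ∩ G.neighborSet w := by
        intro z hz
        rcases hout z hz.2 with rfl | hzv
        · exact absurd ((hz.1 : G.Adj w z).symm) hwNv
        · exact ⟨hzv, hz.1⟩
      exact le_trans (Set.ncard_le_ncard hsub (Set.toFinite _)) (hbip hvnw hwNv)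
  have houtO2 : ∀ w, w ∉ O2 → w = v ∨ w ∈ Lv := by
    intro w hw
    have hw1 : w ∉ O1 := fun h => hw (subset_propStep h)
    rcases hout w hw1 with rfl | hadj
    · exact Or.inl rfl
    · right
      refine ⟨hadj, ?_⟩
      by_contra hleaf
      exact hw (hnonleafO2 w hadj hleaf)
  have hvO3 : v ∈ O3 := by
    by_cases hvO2' : v ∈ O2
    · exact subset_propStep hvO2'
    · have hnoO1 : ¬ ∃ u, G.Adj v u ∧ u ∈ O1 := fun h => hvO2' (hvO2 h)
      by_cases hex : ∃ u, G.Adj v u ∧ ¬ IsLeaf G u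
      · obtain ⟨u, hadj, hleaf⟩ := hex
        have huO2 : u ∈ O2 := hnonleafO2 u hadj hleaf
        refine mem_propStep_iff.mpr
          (Or.inr ⟨u, huO2, ⟨(hadj.symm : G.Adj u v), hvO2'⟩, hforce1 O2 u hadj ?_⟩)
        intro w hw
        rcases houtO2 w hw with h | h
        · exact Or.inl h
        · exact Or.inr h.1
      · push_neg at hex
        exfalso
        have hclosed : ∀ a ∈ insert v (G.neighborSet v), ∀ b, G.Adj a b →
            b ∈ insert v (G.neighborSet v) := by
          intro a ha b hab
          rcases ha with rfl | haN
          · exact Set.mem_insert_of_mem _ hab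
          · have hleaf := hex a haN
            have hNa : G.neighborSet a = {v} := leaf_nbhd hleaf (haN : G.Adj v a).symm
            have hb : b ∈ G.neighborSet a := hab
            rw [hNa] at hb
            rw [Set.mem_singleton_iff] at hb
            rw [hb]
            exact Set.mem_insert v _
        obtain ⟨p⟩ := hconn.preconnected v s
        have hsK : s ∈ insert v (G.neighborSet v) :=
          walk_closed hclosed p (Set.mem_insert v _)
        rcases hsK with rfl | hsN
        · exact hsv rfl
        · exact hnoO1 ⟨s, hsN, subset_closedNbhd hsS'⟩
  have houtO3 : ∀ w, w ∉ O3 → w ∈ Lv := by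
    intro w hw
    have hw2 : w ∉ O2 := fun h => hw (subset_propStep h)
    rcases houtO2 w hw2 with rfl | h
    · exact absurd hvO3 hw
    · exact h
  have hO4 : propStep k G O3 = Set.univ := by
    ext w
    simp only [Set.mem_univ, iff_true]
    by_cases hwO3 : w ∈ O3
    · exact subset_propStep hwO3
    · have hwLv := houtO3 w hwO3
      refine mem_propStep_iff.mpr (Or.inr ⟨v, hvO3, ⟨hwLv.1, hwO3⟩, ?_⟩)
      have hsub : G.neighborSet v \ O3 ⊆ Lv := fun z hz => houtO3 z hz.2
      exact le_trans (Set.ncard_le_ncard hsub (Set.toFinite _)) hLvk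
  refine ⟨4, ?_⟩
  have h4 : powerIter k G S' 4 = propStep k G O3 := rfl
  rw [h4, hO4]

lemma triangle_free' (hC3 : ¬ Nonempty (cycleGraph 3 ↪g G)) :
    ∀ a b c : V, G.Adj a b → G.Adj a c → G.Adj b c → False := by
  intro a b c hab hac hbc
  apply hC3
  have hf : ∀ i j : Fin 3, i ≠ j → G.Adj (![a,b,c] i) (![a,b,c] j) := by
    intro i j hij
    fin_cases i <;> fin_cases j <;> simp_all [G.adj_comm]
  refine ⟨⟨⟨![a,b,c], ?_⟩, ?_⟩⟩
  · intro i j hij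
    by_contra hne
    exact (hf i j hne).ne hij
  · intro i j
    rw [cycleGraph_three_eq_top]
    simp only [top_adj]
    constructor
    · intro h hij
      subst hij
      exact G.irrefl h
    · exact hf i j

lemma common_le' (htri : ∀ a b c : V, G.Adj a b → G.Adj a c → G.Adj b c → False)
    (hK2k1 : ¬ Nonempty (completeBipartiteGraph (Fin 2) (Fin (k + 1)) ↪g G))
    {v w : V} (hne : v ≠ w) (hvw : ¬ G.Adj v w) :
    (G.neighborSet v ∩ G.neighborSet w).ncard ≤ k := by
  by_contra hcard
  push_neg at hcard
  apply hK2k1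
  have hfin : (G.neighborSet v ∩ G.neighborSet w).Finite := Set.toFinite _
  rw [Set.ncard_eq_toFinset_card _ hfin] at hcard
  obtain ⟨u, hsub, hucard⟩ := Finset.exists_subset_card_eq hcard
  set e := Finset.equivFinOfCardEq hucard with he
  set g : Fin (k+1) → V := fun i => ((e.symm i : u) : V) with hg
  have hgmem : ∀ i, g i ∈ G.neighborSet v ∩ G.neighborSet w := by
    intro i
    have h1 : (e.symm i : V) ∈ u := (e.symm i).2
    have h2 := hsub h1
    simpa [hg] using (hfin.mem_toFinset.mp h2)
  have hginj : Function.Injective g := by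
    intro i j hij
    have : (e.symm i : u) = (e.symm j : u) := Subtype.ext hij
    simpa using congrArg e this
  have hadjv : ∀ i, G.Adj v (g i) := fun i => (hgmem i).1
  have hadjw : ∀ i, G.Adj w (g i) := fun i => (hgmem i).2
  set f : Fin 2 ⊕ Fin (k+1) → V := Sum.elim ![v, w] g with hf
  have hvne : ∀ i, v ≠ g i := fun i h => G.irrefl (h ▸ hadjv i)
  have hwne : ∀ i, w ≠ g i := fun i h => G.irrefl (h ▸ hadjw i)
  refine ⟨⟨⟨f, ?_⟩, ?_⟩⟩
  · rintro (i | i) (j | j) hij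
    · fin_cases i <;> fin_cases j <;>
        first
          | rfl
          | (exfalso; exact hne (by simpa [hf] using hij))
          | (exfalso; exact hne (by simpa [hf] using hij.symm))
    · exfalso; fin_cases i <;> simp_all [hf]
    · exfalso; fin_cases j <;> simp_all [hf] <;> [exact hvne i hij.symm; exact hwne i hij.symm]
    · simpa using hginj hij
  · rintro (i | i) (j | j)
    · simp only [completeBipartiteGraph]
      fin_cases i <;> fin_cases j <;>
        simp_all [hf, G.irrefl, G.adj_comm]
    · have : G.Adj (f (Sum.inl i)) (f (Sum.inr j)) := by
        fin_cases i <;> simpa [hf] using by first | exact hadjv j | exact hadjw j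
      simp [completeBipartiteGraph]
      exact this
    · have : G.Adj (f (Sum.inr i)) (f (Sum.inl j)) := by
        fin_cases j <;> simpa [hf] using by
          first | exact (hadjv i).symm | exact (hadjw i).symm
      simp [completeBipartiteGraph]
      exact this
    · have : ¬ G.Adj (g i) (g j) := fun h => htri v (g i) (g j) (hadjv i) (hadjv j) h
      simp [completeBipartiteGraph, hf, this]

end Aux

end PowerProp


open PowerProp in
/-- For a connected graph `G` on at least `k+2` vertices with no induced `C_3`,
`K_{2,k+1}`, or `K_2 ∨ K̄_k`, one has `ppt_k(G) = 1` iff `G` has a minimum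
dominating set consisting of `k`-strong support vertices. -/
theorem ppt_eq_one_iff {V : Type*} [Fintype V]
    (k : ℕ) (hk : 1 ≤ k) (G : SimpleGraph V) (hconn : G.Connected)
    (hcard : k + 2 ≤ Fintype.card V)
    (hC3 : ¬ Nonempty (cycleGraph 3 ↪g G))
    (hK2k1 : ¬ Nonempty (completeBipartiteGraph (Fin 2) (Fin (k + 1)) ↪g G))
    (hjoin : ¬ Nonempty (joinK2Empty k ↪g G)) :
    ppt k G = 1 ↔
      ∃ S : Set V, IsDomSet G S ∧ S.ncard = domNum G ∧
        ∀ v ∈ S, IsKStrongSupport k G v := by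
  classical
  have htri : ∀ a b c : V, G.Adj a b → G.Adj a c → G.Adj b c → False := triangle_free' hC3
  have hbip : ∀ ⦃v w : V⦄, v ≠ w → ¬ G.Adj v w →
      (G.neighborSet v ∩ G.neighborSet w).ncard ≤ k :=
    fun v w h1 h2 => common_le' htri hK2k1 h1 h2
  have hV2 : 2 ≤ Fintype.card V := by omega
  have hneV : Nonempty V := Fintype.card_pos_iff.mp (by omega)
  have hcard_univ : (Set.univ : Set V).ncard = Fintype.card V := by
    rw [Set.ncard_univ, Nat.card_eq_fintype_card]
  -- pdNum < card V
  have hpd_lt : pdNum k G < Fintype.card V := by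
    obtain ⟨x⟩ := hneV
    obtain ⟨y, hxy⟩ := exists_adj hconn hV2 x
    have hdomx : IsDomSet G (Set.univ \ {x}) := by
      intro w hw
      have hwx : w = x := by
        by_contra hne
        exact hw ⟨Set.mem_univ w, hne⟩
      subst hwx
      exact ⟨y, ⟨Set.mem_univ y, fun h => G.irrefl (h ▸ hxy)⟩, hxy.symm⟩
    have h1 := pdNum_le (k := k) (isPDS_of_domSet hdomx)
    have h2 : (Set.univ \ {x} : Set V).ncard = Fintype.card V - 1 := by
      rw [Set.ncard_diff_singleton_of_mem (Set.mem_univ x), hcard_univ]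
    omega
  have hTne : {t | ∃ S : Set V, IsMinPDS k G S ∧ pptOf k G S = t}.Nonempty := by
    obtain ⟨S, hcardS, hpds⟩ := pdNum_exists (k := k) (G := G)
    exact ⟨pptOf k G S, S, ⟨hpds, hcardS⟩, rfl⟩
  have hmin_ne_univ : ∀ S : Set V, IsMinPDS k G S → S ≠ Set.univ := by
    intro S hS hEq
    have h1 : S.ncard = Fintype.card V := by rw [hEq, hcard_univ]
    have h2 := hS.2
    omega
  have hppt0 : ∀ S : Set V, IsMinPDS k G S → pptOf k G S ≠ 0 := by
    intro S hS h0
    have hne' : {l | powerIter k G S l = Set.univ}.Nonempty := hS.1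
    have hmem := Nat.sInf_mem hne'
    rw [show sInf {l | powerIter k G S l = Set.univ} = pptOf k G S from rfl, h0] at hmem
    exact hmin_ne_univ S hS hmem
  constructor
  · intro h1
    have hmem := Nat.sInf_mem hTne
    rw [show sInf {t | ∃ S : Set V, IsMinPDS k G S ∧ pptOf k G S = t} = ppt k G from rfl,
      h1] at hmem
    obtain ⟨S, hS, hpptS⟩ := hmem
    have hne' : {l | powerIter k G S l = Set.univ}.Nonempty := hS.1
    have h1mem := Nat.sInf_mem hne'
    rw [show sInf {l | powerIter k G S l = Set.univ} = pptOf k G S from rfl, hpptS] at h1mem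
    have hdom : IsDomSet G S := closedNbhd_eq_univ_iff.mp h1mem
    have hcd : S.ncard = domNum G := by
      have h2 := domNum_le hdom
      have h3 := pdNum_le_domNum (k := k) (G := G)
      have h4 := hS.2
      omega
    refine ⟨S, hdom, hcd, ?_⟩
    intro v hvS
    by_contra hnot
    by_cases hex : ∃ s ∈ S, s ≠ v
    · obtain ⟨s, hsS, hsv⟩ := hex
      have hpds' := remove_pds hk hconn htri hbip hdom hvS hnot hsS hsv
      have h5 := pdNum_le hpds'
      have h6 := Set.ncard_diff_singleton_lt_of_mem hvS (Set.toFinite S)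
      have h7 := hS.2
      omega
    · push_neg at hex
      apply hnot
      have hadj : ∀ w, w ≠ v → G.Adj v w := by
        intro w hw
        have hwS : w ∉ S := fun h => hw (hex w h)
        obtain ⟨u, huS, h⟩ := hdom w hwS
        rwa [hex u huS] at h
      have hleaf : ∀ w, w ≠ v → IsLeaf G w := by
        intro w hw
        have hvw := hadj w hw
        have hNw : G.neighborSet w = {v} := by
          apply subset_antisymm
          · intro z hz
            rw [Set.mem_singleton_iff]
            by_contra hzv
            exact htri v w z hvw (hadj z hzv) hz
          · intro z hz
            rw [Set.mem_singleton_iff] at hz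
            subst hz
            exact hvw.symm
        rw [IsLeaf, hNw]
        exact Set.ncard_singleton v
      rw [IsKStrongSupport]
      have hsub : Set.univ \ {v} ⊆ G.neighborSet v ∩ {u | IsLeaf G u} := by
        intro w hw
        have hwv : w ≠ v := hw.2
        exact ⟨hadj w hwv, hleaf w hwv⟩
      have h8 := Set.ncard_le_ncard hsub (Set.toFinite _)
      have h9 : (Set.univ \ {v} : Set V).ncard = Fintype.card V - 1 := by
        rw [Set.ncard_diff_singleton_of_mem (Set.mem_univ v), hcard_univ]
      omega
  · rintro ⟨S, hdom, hcardS, hsupp⟩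
    have hSpds : IsPDS k G S := isPDS_of_domSet hdom
    have hSmin : S.ncard = pdNum k G := by
      apply le_antisymm
      · obtain ⟨T, hTcard, hTpds⟩ := pdNum_exists (k := k) (G := G)
        calc S.ncard ≤ T.ncard := card_le_of_supports hk hsupp hTpds
        _ = pdNum k G := hTcard
      · exact pdNum_le hSpds
    have hpptS : pptOf k G S = 1 := by
      have h1 : (1 : ℕ) ∈ {l | powerIter k G S l = Set.univ} := by
        show powerIter k G S 1 = Set.univ
        rw [powerIter_one]
        exact closedNbhd_eq_univ_iff.mpr hdom
      have hle : pptOf k G S ≤ 1 := Nat.sInf_le h1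
      have hne0 := hppt0 S ⟨hSpds, hSmin⟩
      omega
    have h1T : (1 : ℕ) ∈ {t | ∃ S : Set V, IsMinPDS k G S ∧ pptOf k G S = t} :=
      ⟨S, ⟨hSpds, hSmin⟩, hpptS⟩
    have hle : ppt k G ≤ 1 := Nat.sInf_le h1T
    have hne0 : ppt k G ≠ 0 := by
      intro h0
      have hmem := Nat.sInf_mem hTne
      rw [show sInf {t | ∃ S : Set V, IsMinPDS k G S ∧ pptOf k G S = t} = ppt k G from rfl,
        h0] at hmem
      obtain ⟨T, hT, hT0⟩ := hmem
      exact hppt0 T hT hT0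
    omega
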